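/- Let p = 1 and fix positive constants α, δ, ε, K. Suppose P and Q are Borel probability measures on ℝ with P(B_m) + Q(B_m) ≤ K·2^{−(2+δ)m} for all m ≥ 0, and |P(π_m^{−1}(F) ∩ B_m) − Q(π_m^{−1}(F) ∩ B_m)| ≤ K (2+α)^{−m} ε for all m ≤ M, F ∈ 𝒫_l, l ≤ L. Then W_1(P,Q) ≤ K'·(2^{−L} + L ε + 2^{−(1+δ)M}) with K' depending only on α, K. -/

import Mathlib

open MeasureTheory ENNReal

/-- `WpPow p P Q`: the `p`-th power of the order-`p` Wasserstein distance,
as the infimum over couplings of `∫ |x-y|^p dπ`. -/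
noncomputable def WpPow (p : ℝ) (P Q : Measure ℝ) : ℝ≥0∞ :=
  ⨅ (π : Measure (ℝ × ℝ)) (_ : π.map Prod.fst = P) (_ : π.map Prod.snd = Q),
    ∫⁻ z, ENNReal.ofReal (|z.1 - z.2| ^ p) ∂π

/-- Dyadic annuli: `B 0 = (-1,1]`, `B m = (-2^m,2^m] \ (-2^(m-1),2^(m-1)]`. -/
def dyadicB : ℕ → Set ℝ
  | 0 => Set.Ioc (-1) 1
  | (m + 1) => Set.Ioc (-(2 : ℝ) ^ (m + 1)) ((2 : ℝ) ^ (m + 1)) \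
      Set.Ioc (-(2 : ℝ) ^ m) ((2 : ℝ) ^ m)

/-- The `j`-th cell of the partition `𝒫_l` of `(-1,1]` into `2^l` intervals. -/
noncomputable def dyadicCell (l j : ℕ) : Set ℝ :=
  Set.Ioc (-1 + j * (2 : ℝ) ^ ((1 : ℝ) - l)) (-1 + (j + 1) * (2 : ℝ) ^ ((1 : ℝ) - l))

/-- `π_m⁻¹(F) ∩ B_m` where `π_m(x) = x / 2^m` and `F` is the `j`-th cell of `𝒫_l`. -/
noncomputable def cellInAnnulus (m l j : ℕ) : Set ℝ :=
  ((fun x : ℝ => x / (2 : ℝ) ^ m) ⁻¹' dyadicCell l j) ∩ dyadicB m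


noncomputable def subcell (a len : ℝ) (l j : ℕ) : Set ℝ :=
  Set.Ioc (a + j * (len / 2 ^ l)) (a + (j + 1) * (len / 2 ^ l))

noncomputable def ddist (μ ν : Measure ℝ) (s : Set ℝ) : ℝ≥0∞ := (μ s - ν s) + (ν s - μ s)

lemma ddist_eq (μ ν : Measure ℝ) [IsFiniteMeasure μ] [IsFiniteMeasure ν] (s : Set ℝ) :
    ddist μ ν s = ENNReal.ofReal |(μ s).toReal - (ν s).toReal| := by
  have hμ := measure_ne_top μ s
  have hν := measure_ne_top ν s
  rcases le_total (μ s) (ν s) with h | h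
  · have h' : (μ s).toReal ≤ (ν s).toReal := ENNReal.toReal_mono hν h
    rw [ddist, tsub_eq_zero_of_le h, zero_add, abs_of_nonpos (by linarith), neg_sub,
      ENNReal.ofReal_sub _ ENNReal.toReal_nonneg, ENNReal.ofReal_toReal hν,
      ENNReal.ofReal_toReal hμ]
  · have h' : (ν s).toReal ≤ (μ s).toReal := ENNReal.toReal_mono hμ h
    rw [ddist, tsub_eq_zero_of_le h, add_zero, abs_of_nonneg (by linarith),
      ENNReal.ofReal_sub _ ENNReal.toReal_nonneg, ENNReal.ofReal_toReal hν,
      ENNReal.ofReal_toReal hμ]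

lemma smul_le_self_of_le_one {μ : Measure ℝ} {c : ℝ≥0∞} (hc : c ≤ 1) : c • μ ≤ μ := by
  intro s
  simp only [Measure.smul_apply, smul_eq_mul]
  calc c * μ s ≤ 1 * μ s := by gcongr
  _ = μ s := one_mul _

/-- Product coupling of two finite measures supported on a set of diameter ≤ len. -/
lemma prod_coupling (μ ν : Measure ℝ) [IsFiniteMeasure μ] [IsFiniteMeasure ν]
    (I : Set ℝ) (hI : MeasurableSet I) (len : ℝ)
    (hdiam : ∀ x ∈ I, ∀ y ∈ I, |x - y| ≤ len)
    (hμ : μ Iᶜ = 0) (hν : ν Iᶜ = 0) :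
    ∃ π : Measure (ℝ × ℝ),
      π.map Prod.fst ≤ μ ∧ π.map Prod.snd ≤ ν ∧
      π Set.univ = min (μ Set.univ) (ν Set.univ) ∧
      ∫⁻ z, ENNReal.ofReal |z.1 - z.2| ∂π
        ≤ ENNReal.ofReal len * min (μ Set.univ) (ν Set.univ) := by
  rcases eq_or_ne (min (μ Set.univ) (ν Set.univ)) 0 with h0 | h0
  · refine ⟨0, ?_, ?_, ?_, ?_⟩
    · rw [Measure.map_zero]; exact Measure.zero_le μ
    · rw [Measure.map_zero]; exact Measure.zero_le ν
    · simpa using h0.symm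
    · simp
  · have hμ0 : μ Set.univ ≠ 0 := fun h => h0 (by simp [h])
    have hν0 : ν Set.univ ≠ 0 := fun h => h0 (by simp [h])
    have hμt := measure_ne_top μ Set.univ
    have hνt := measure_ne_top ν Set.univ
    set c : ℝ≥0∞ := min (μ Set.univ) (ν Set.univ) * (μ Set.univ * ν Set.univ)⁻¹ with hc
    refine ⟨c • (μ.prod ν), ?_, ?_, ?_, ?_⟩
    · rw [Measure.map_smul, Measure.map_fst_prod]
      rw [smul_smul]
      apply smul_le_self_of_le_one
      rw [hc]
      calc min (μ Set.univ) (ν Set.univ) * (μ Set.univ * ν Set.univ)⁻¹ * ν Set.univ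
          ≤ μ Set.univ * (μ Set.univ * ν Set.univ)⁻¹ * ν Set.univ := by gcongr; exact min_le_left _ _
        _ = (μ Set.univ * ν Set.univ) * (μ Set.univ * ν Set.univ)⁻¹ := by ring
        _ ≤ 1 := ENNReal.mul_inv_le_one _
    · rw [Measure.map_smul, Measure.map_snd_prod]
      rw [smul_smul]
      apply smul_le_self_of_le_one
      rw [hc]
      calc min (μ Set.univ) (ν Set.univ) * (μ Set.univ * ν Set.univ)⁻¹ * μ Set.univ
          ≤ ν Set.univ * (μ Set.univ * ν Set.univ)⁻¹ * μ Set.univ := by gcongr; exact min_le_right _ _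
        _ = (μ Set.univ * ν Set.univ) * (μ Set.univ * ν Set.univ)⁻¹ := by ring
        _ ≤ 1 := ENNReal.mul_inv_le_one _
    · have : (μ.prod ν) Set.univ = μ Set.univ * ν Set.univ := by
        rw [← Set.univ_prod_univ, Measure.prod_prod]
      simp only [Measure.smul_apply, smul_eq_mul, this, hc]
      rw [mul_assoc, ENNReal.inv_mul_cancel (mul_ne_zero hμ0 hν0) (by finiteness), mul_one]
    · have hnull : (c • (μ.prod ν)) ((I ×ˢ I)ᶜ) = 0 := by
        have hsub : (I ×ˢ I)ᶜ ⊆ (Iᶜ ×ˢ (Set.univ : Set ℝ)) ∪ ((Set.univ : Set ℝ) ×ˢ Iᶜ) := by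
          intro z hz
          simp only [Set.mem_compl_iff, Set.mem_prod, not_and_or] at hz
          rcases hz with h | h
          · exact Or.inl ⟨h, trivial⟩
          · exact Or.inr ⟨trivial, h⟩
        have h1 : (μ.prod ν) (Iᶜ ×ˢ (Set.univ : Set ℝ)) = 0 := by
          rw [Measure.prod_prod, hμ, zero_mul]
        have h2 : (μ.prod ν) ((Set.univ : Set ℝ) ×ˢ Iᶜ) = 0 := by
          rw [Measure.prod_prod, hν, mul_zero]
        have : (μ.prod ν) ((I ×ˢ I)ᶜ) = 0 :=
          measure_mono_null hsub (le_antisymm ((measure_union_le _ _).trans (by rw [h1, h2]; simp)) zero_le)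
        simp [Measure.smul_apply, this]
      have hae : ∀ᵐ z ∂(c • (μ.prod ν)), ENNReal.ofReal |z.1 - z.2| ≤ ENNReal.ofReal len := by
        rw [ae_iff]
        refine measure_mono_null ?_ hnull
        intro z hz hmem
        exact hz (ENNReal.ofReal_le_ofReal (hdiam z.1 hmem.1 z.2 hmem.2))
      calc ∫⁻ z, ENNReal.ofReal |z.1 - z.2| ∂(c • (μ.prod ν))
          ≤ ∫⁻ _, ENNReal.ofReal len ∂(c • (μ.prod ν)) := lintegral_mono_ae hae
        _ = ENNReal.ofReal len * (c • (μ.prod ν)) Set.univ := lintegral_const _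
        _ ≤ ENNReal.ofReal len * min (μ Set.univ) (ν Set.univ) := by
            apply mul_le_mul_right (le_of_eq ?_)
            have : (μ.prod ν) Set.univ = μ Set.univ * ν Set.univ := by
              rw [← Set.univ_prod_univ, Measure.prod_prod]
            simp only [Measure.smul_apply, smul_eq_mul, this, hc]
            rw [mul_assoc, ENNReal.inv_mul_cancel (mul_ne_zero hμ0 hν0) (by finiteness), mul_one]

lemma subcell_def (a len : ℝ) (l j : ℕ) : subcell a len l j =
    Set.Ioc (a + j * (len / 2 ^ l)) (a + (j + 1) * (len / 2 ^ l)) := rfl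

lemma subcell_meas (a len : ℝ) (l j : ℕ) : MeasurableSet (subcell a len l j) :=
  measurableSet_Ioc

lemma subcell_left (a len : ℝ) (l j : ℕ) : subcell a (len / 2) l j = subcell a len (l + 1) j := by
  rw [subcell_def, subcell_def]
  congr 1 <;> ring

lemma subcell_right (a len : ℝ) (l j : ℕ) :
    subcell (a + len / 2) (len / 2) l j = subcell a len (l + 1) (j + 2 ^ l) := by
  rw [subcell_def, subcell_def]
  push_cast
  have h1 : a + len / 2 + (j : ℝ) * (len / 2 / 2 ^ l) =
      a + ((j : ℝ) + 2 ^ l) * (len / 2 ^ (l + 1)) := by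
    rw [pow_succ]; field_simp; ring
  have h2 : a + len / 2 + ((j : ℝ) + 1) * (len / 2 / 2 ^ l) =
      a + ((j : ℝ) + 2 ^ l + 1) * (len / 2 ^ (l + 1)) := by
    rw [pow_succ]; field_simp; ring
  rw [h1, h2]

lemma subcell_one_zero (a len : ℝ) : subcell a len 1 0 = Set.Ioc a (a + len / 2) := by
  rw [subcell_def]; norm_num

lemma subcell_one_one (a len : ℝ) : subcell a len 1 1 = Set.Ioc (a + len / 2) (a + len) := by
  rw [subcell_def]
  have h1 : a + (1 : ℕ) * (len / 2 ^ 1) = a + len / 2 := by norm_num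
  have h2 : a + ((1 : ℕ) + 1) * (len / 2 ^ 1) = a + len := by push_cast; ring
  rw [h1, h2]

lemma ddist_restrict (μ ν : Measure ℝ) (s t : Set ℝ) (hs : MeasurableSet s) (hst : s ⊆ t) :
    ddist (μ.restrict t) (ν.restrict t) s = ddist μ ν s := by
  unfold ddist
  rw [Measure.restrict_eq_self μ hst, Measure.restrict_eq_self ν hst]

lemma excess_le_ddist (x y : ℝ≥0∞) : x - min x y ≤ (x - y) + (y - x) := by
  rcases le_total x y with h | h
  · simp [min_eq_left h, tsub_eq_zero_of_le h]
  · rw [min_eq_right h]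
    exact le_add_right le_rfl

lemma ofReal_half : ENNReal.ofReal (1 / 2 : ℝ) = 2⁻¹ := by
  rw [show (1 / 2 : ℝ) = (2 : ℝ)⁻¹ by norm_num, ENNReal.ofReal_inv_of_pos two_pos]
  norm_num

/-- Multiscale coupling on an interval. -/
lemma interval_coupling : ∀ (Lev : ℕ) (a len : ℝ), 0 ≤ len → ∀ (D : ℝ≥0∞)
    (μ ν : Measure ℝ), ∀ (_ : IsFiniteMeasure μ) (_ : IsFiniteMeasure ν),
    μ (Set.Ioc a (a + len))ᶜ = 0 → ν (Set.Ioc a (a + len))ᶜ = 0 →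
    (∀ l, 1 ≤ l → l ≤ Lev → ∀ j, j < 2 ^ l → ddist μ ν (subcell a len l j) ≤ D) →
    ∃ π : Measure (ℝ × ℝ),
      π.map Prod.fst ≤ μ ∧ π.map Prod.snd ≤ ν ∧
      min (μ Set.univ) (ν Set.univ) ≤ π Set.univ ∧
      ∫⁻ z, ENNReal.ofReal |z.1 - z.2| ∂π ≤
        ENNReal.ofReal len * ((2⁻¹ : ℝ≥0∞) ^ Lev * min (μ Set.univ) (ν Set.univ)
          + 2 * Lev * D) := by
  intro Lev
  induction Lev with
  | zero =>
    intro a len hlen D μ ν hμf hνf hμ hν _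
    obtain ⟨π, h1, h2, h3, h4⟩ := prod_coupling μ ν (Set.Ioc a (a + len)) measurableSet_Ioc len
      (fun x hx y hy => abs_sub_le_iff.2 ⟨by cases hx; cases hy; linarith,
        by cases hx; cases hy; linarith⟩) hμ hν
    refine ⟨π, h1, h2, le_of_eq h3.symm, h4.trans (le_of_eq ?_)⟩
    simp
  | succ Lev ih =>
    intro a len hlen D μ ν hμf hνf hμ hν hdd
    -- the two halves
    set IL := Set.Ioc a (a + len / 2) with hIL
    set IR := Set.Ioc (a + len / 2) (a + len) with hIR
    have hILR : IL ∪ IR = Set.Ioc a (a + len) := Set.Ioc_union_Ioc_eq_Ioc (by linarith) (by linarith)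
    have hdisj : Disjoint IL IR := Set.Ioc_disjoint_Ioc_of_le le_rfl
    have hres : ∀ (κ : Measure ℝ), κ (Set.Ioc a (a + len))ᶜ = 0 →
        κ.restrict IL + κ.restrict IR = κ := by
      intro κ hκ
      rw [← Measure.restrict_union hdisj measurableSet_Ioc, hILR,
        Measure.restrict_eq_self_of_ae_mem]
      rw [Filter.eventually_iff, mem_ae_iff]
      simpa [Set.Ioc] using hκ
    have hILsub : IL ⊆ Set.Ioc a (a + len) := by
      rw [← hILR]; exact Set.subset_union_left
    have hIRsub : IR ⊆ Set.Ioc a (a + len) := by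
      rw [← hILR]; exact Set.subset_union_right
    have hcI : ∀ s : Set ℝ, s ⊆ Set.Ioc a (a + len) →
        ∀ (κ : Measure ℝ), (κ.restrict s) (Set.Ioc a (a + len))ᶜ = 0 := by
      intro s hs κ
      rw [Measure.restrict_apply measurableSet_Ioc.compl]
      have : (Set.Ioc a (a + len))ᶜ ∩ s = ∅ := by
        rw [Set.eq_empty_iff_forall_notMem]
        rintro x ⟨hx1, hx2⟩
        exact hx1 (hs hx2)
      rw [this, measure_empty]
    -- restricted measures
    set μL := μ.restrict IL with hμLdef
    set μR := μ.restrict IR with hμRdef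
    set νL := ν.restrict IL with hνLdef
    set νR := ν.restrict IR with hνRdef
    have hμLnull : μL (Set.Ioc a (a + len / 2))ᶜ = 0 := by
      rw [hμLdef, Measure.restrict_apply measurableSet_Ioc.compl]
      simp [hIL]
    have hνLnull : νL (Set.Ioc a (a + len / 2))ᶜ = 0 := by
      rw [hνLdef, Measure.restrict_apply measurableSet_Ioc.compl]
      simp [hIL]
    have hmid : a + len / 2 + len / 2 = a + len := by ring
    have hμRnull : μR (Set.Ioc (a + len / 2) (a + len / 2 + len / 2))ᶜ = 0 := by
      rw [hmid, hμRdef, Measure.restrict_apply measurableSet_Ioc.compl]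
      simp [hIR]
    have hνRnull : νR (Set.Ioc (a + len / 2) (a + len / 2 + len / 2))ᶜ = 0 := by
      rw [hmid, hνRdef, Measure.restrict_apply measurableSet_Ioc.compl]
      simp [hIR]
    -- cell bounds for the halves
    have hpow : ∀ l : ℕ, (2 : ℝ) ^ l * (len / 2 ^ (l + 1)) = len / 2 := by
      intro l
      rw [pow_succ]
      field_simp
    have hddL : ∀ l, 1 ≤ l → l ≤ Lev → ∀ j, j < 2 ^ l →
        ddist μL νL (subcell a (len / 2) l j) ≤ D := by
      intro l h1 h2 j hj
      rw [subcell_left]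
      have hcast : (j : ℝ) + 1 ≤ 2 ^ l := by exact_mod_cast Nat.succ_le_of_lt hj
      have hsub : subcell a len (l + 1) j ⊆ IL := by
        rw [subcell_def, hIL]
        apply Set.Ioc_subset_Ioc
        · have : 0 ≤ (j : ℝ) * (len / 2 ^ (l + 1)) := by positivity
          linarith
        · have h3 : ((j : ℝ) + 1) * (len / 2 ^ (l + 1)) ≤ 2 ^ l * (len / 2 ^ (l + 1)) := by
            apply mul_le_mul_of_nonneg_right hcast (by positivity)
          rw [hpow l] at h3
          linarith
      rw [hμLdef, hνLdef, ddist_restrict μ ν _ IL (subcell_meas _ _ _ _) hsub]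
      exact hdd (l + 1) (by omega) (by omega) j
        (lt_of_lt_of_le hj (Nat.pow_le_pow_right (by norm_num) (Nat.le_succ l)))
    have hddR : ∀ l, 1 ≤ l → l ≤ Lev → ∀ j, j < 2 ^ l →
        ddist μR νR (subcell (a + len / 2) (len / 2) l j) ≤ D := by
      intro l h1 h2 j hj
      rw [subcell_right]
      have hcast : (j : ℝ) + 2 ^ l + 1 ≤ 2 ^ (l + 1) := by
        have : (j : ℝ) + 1 ≤ 2 ^ l := by exact_mod_cast Nat.succ_le_of_lt hj
        have h2l : (2 : ℝ) ^ (l + 1) = 2 ^ l + 2 ^ l := by rw [pow_succ]; ring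
        linarith
      have hsub : subcell a len (l + 1) (j + 2 ^ l) ⊆ IR := by
        rw [subcell_def, hIR]
        push_cast
        apply Set.Ioc_subset_Ioc
        · have h3 : (2 : ℝ) ^ l * (len / 2 ^ (l + 1)) ≤ ((j : ℝ) + 2 ^ l) * (len / 2 ^ (l + 1)) := by
            have hj0 : (0 : ℝ) ≤ (j : ℝ) := Nat.cast_nonneg j
            apply mul_le_mul_of_nonneg_right (by linarith) (by positivity)
          rw [hpow l] at h3
          linarith
        · have h4 : ((j : ℝ) + 2 ^ l + 1) * (len / 2 ^ (l + 1)) ≤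
              2 ^ (l + 1) * (len / 2 ^ (l + 1)) := by
            apply mul_le_mul_of_nonneg_right hcast (by positivity)
          have h5 : (2 : ℝ) ^ (l + 1) * (len / 2 ^ (l + 1)) = len := by
            field_simp
          rw [h5] at h4
          linarith
      rw [hμRdef, hνRdef, ddist_restrict μ ν _ IR (subcell_meas _ _ _ _) hsub]
      refine hdd (l + 1) (by omega) (by omega) (j + 2 ^ l) ?_
      have := Nat.pow_lt_pow_right (a := 2) (by norm_num) (Nat.lt_succ_self l)
      omega
    -- apply the induction hypothesis on both halves
    obtain ⟨πL, hL1, hL2, hL3, hL4⟩ := ih a (len / 2) (by linarith) D μL νL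
      inferInstance inferInstance hμLnull hνLnull hddL
    obtain ⟨πR, hR1, hR2, hR3, hR4⟩ := ih (a + len / 2) (len / 2) (by linarith) D μR νR
      inferInstance inferInstance hμRnull hνRnull hddR
    -- leftover measures
    haveI hfL : IsFiniteMeasure (πL.map Prod.fst) := isFiniteMeasure_of_le μL hL1
    haveI hfL2 : IsFiniteMeasure (πL.map Prod.snd) := isFiniteMeasure_of_le νL hL2
    haveI hfR : IsFiniteMeasure (πR.map Prod.fst) := isFiniteMeasure_of_le μR hR1
    haveI hfR2 : IsFiniteMeasure (πR.map Prod.snd) := isFiniteMeasure_of_le νR hR2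
    set μL' := μL - πL.map Prod.fst with hμL'
    set μR' := μR - πR.map Prod.fst with hμR'
    set νL' := νL - πL.map Prod.snd with hνL'
    set νR' := νR - πR.map Prod.snd with hνR'
    have hsumμL : μL' + πL.map Prod.fst = μL := Measure.sub_add_cancel_of_le hL1
    have hsumμR : μR' + πR.map Prod.fst = μR := Measure.sub_add_cancel_of_le hR1
    have hsumνL : νL' + πL.map Prod.snd = νL := Measure.sub_add_cancel_of_le hL2
    have hsumνR : νR' + πR.map Prod.snd = νR := Measure.sub_add_cancel_of_le hR2
    haveI : IsFiniteMeasure μL' := isFiniteMeasure_of_le μL Measure.sub_le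
    haveI : IsFiniteMeasure μR' := isFiniteMeasure_of_le μR Measure.sub_le
    haveI : IsFiniteMeasure νL' := isFiniteMeasure_of_le νL Measure.sub_le
    haveI : IsFiniteMeasure νR' := isFiniteMeasure_of_le νR Measure.sub_le
    set Eμ := μL' + μR' with hEμ
    set Eν := νL' + νR' with hEν
    have hnull' : ∀ (κ κ' : Measure ℝ) (s : Set ℝ), s ⊆ Set.Ioc a (a + len) →
        κ' ≤ κ.restrict s → κ' (Set.Ioc a (a + len))ᶜ = 0 := by
      intro κ κ' s hs hle
      refine le_antisymm ((Measure.le_iff'.1 hle _).trans ?_) zero_le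
      rw [hcI s hs κ]
    have hEμnull : Eμ (Set.Ioc a (a + len))ᶜ = 0 := by
      rw [hEμ, Measure.add_apply,
        hnull' μ μL' IL hILsub (hμLdef ▸ Measure.sub_le),
        hnull' μ μR' IR hIRsub (hμRdef ▸ Measure.sub_le), add_zero]
    have hEνnull : Eν (Set.Ioc a (a + len))ᶜ = 0 := by
      rw [hEν, Measure.add_apply,
        hnull' ν νL' IL hILsub (hνLdef ▸ Measure.sub_le),
        hnull' ν νR' IR hIRsub (hνRdef ▸ Measure.sub_le), add_zero]
    obtain ⟨π3, hm1, hm2, hm3, hm4⟩ := prod_coupling Eμ Eν (Set.Ioc a (a + len))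
      measurableSet_Ioc len
      (fun x hx y hy => abs_sub_le_iff.2 ⟨by cases hx; cases hy; linarith,
        by cases hx; cases hy; linarith⟩) hEμnull hEνnull
    -- total masses
    have hmapuL : (πL.map Prod.fst) Set.univ = πL Set.univ := by
      rw [Measure.map_apply measurable_fst MeasurableSet.univ, Set.preimage_univ]
    have hmapuR : (πR.map Prod.fst) Set.univ = πR Set.univ := by
      rw [Measure.map_apply measurable_fst MeasurableSet.univ, Set.preimage_univ]
    have hmapuL2 : (πL.map Prod.snd) Set.univ = πL Set.univ := by
      rw [Measure.map_apply measurable_snd MeasurableSet.univ, Set.preimage_univ]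
    have hmapuR2 : (πR.map Prod.snd) Set.univ = πR Set.univ := by
      rw [Measure.map_apply measurable_snd MeasurableSet.univ, Set.preimage_univ]
    have hμLu : μL' Set.univ = μL Set.univ - πL Set.univ := by
      rw [hμL', Measure.sub_apply MeasurableSet.univ hL1, hmapuL]
    have hμRu : μR' Set.univ = μR Set.univ - πR Set.univ := by
      rw [hμR', Measure.sub_apply MeasurableSet.univ hR1, hmapuR]
    have hνLu : νL' Set.univ = νL Set.univ - πL Set.univ := by
      rw [hνL', Measure.sub_apply MeasurableSet.univ hL2, hmapuL2]
    have hνRu : νR' Set.univ = νR Set.univ - πR Set.univ := by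
      rw [hνR', Measure.sub_apply MeasurableSet.univ hR2, hmapuR2]
    -- excess mass bounds
    have hDL : ddist μ ν IL ≤ D := by
      rw [hIL, ← subcell_one_zero a len]
      exact hdd 1 le_rfl (by omega) 0 (by norm_num)
    have hDR : ddist μ ν IR ≤ D := by
      rw [hIR, ← subcell_one_one a len]
      exact hdd 1 le_rfl (by omega) 1 (by norm_num)
    have hμLIL : μL Set.univ = μ IL := by rw [hμLdef, Measure.restrict_apply_univ]
    have hμRIR : μR Set.univ = μ IR := by rw [hμRdef, Measure.restrict_apply_univ]
    have hνLIL : νL Set.univ = ν IL := by rw [hνLdef, Measure.restrict_apply_univ]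
    have hνRIR : νR Set.univ = ν IR := by rw [hνRdef, Measure.restrict_apply_univ]
    have hμL'D : μL' Set.univ ≤ D := by
      rw [hμLu]
      calc μL Set.univ - πL Set.univ ≤ μL Set.univ - min (μL Set.univ) (νL Set.univ) :=
            tsub_le_tsub_left hL3 _
        _ ≤ (μL Set.univ - νL Set.univ) + (νL Set.univ - μL Set.univ) := excess_le_ddist _ _
        _ = ddist μ ν IL := by rw [ddist, hμLIL, hνLIL]
        _ ≤ D := hDL
    have hμR'D : μR' Set.univ ≤ D := by
      rw [hμRu]
      calc μR Set.univ - πR Set.univ ≤ μR Set.univ - min (μR Set.univ) (νR Set.univ) :=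
            tsub_le_tsub_left hR3 _
        _ ≤ (μR Set.univ - νR Set.univ) + (νR Set.univ - μR Set.univ) := excess_le_ddist _ _
        _ = ddist μ ν IR := by rw [ddist, hμRIR, hνRIR]
        _ ≤ D := hDR
    have hEμu2D : Eμ Set.univ ≤ 2 * D := by
      rw [hEμ, Measure.add_apply, two_mul]
      exact add_le_add hμL'D hμR'D
    -- sum of restricted masses
    have hxsum : μL Set.univ + μR Set.univ = μ Set.univ := by
      conv_rhs => rw [← hres μ hμ]
      rw [Measure.add_apply, hμLdef, hμRdef]
    have hysum : νL Set.univ + νR Set.univ = ν Set.univ := by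
      conv_rhs => rw [← hres ν hν]
      rw [Measure.add_apply, hνLdef, hνRdef]
    refine ⟨πL + πR + π3, ?_, ?_, ?_, ?_⟩
    · rw [Measure.map_add _ _ measurable_fst, Measure.map_add _ _ measurable_fst]
      calc πL.map Prod.fst + πR.map Prod.fst + π3.map Prod.fst
          ≤ πL.map Prod.fst + πR.map Prod.fst + Eμ := add_le_add_right hm1 _
        _ = μ := by
            have h : πL.map Prod.fst + πR.map Prod.fst + Eμ
                = (μL' + πL.map Prod.fst) + (μR' + πR.map Prod.fst) := by rw [hEμ]; abel
            rw [h, hsumμL, hsumμR, hμLdef, hμRdef, hres μ hμ]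
    · rw [Measure.map_add _ _ measurable_snd, Measure.map_add _ _ measurable_snd]
      calc πL.map Prod.snd + πR.map Prod.snd + π3.map Prod.snd
          ≤ πL.map Prod.snd + πR.map Prod.snd + Eν := add_le_add_right hm2 _
        _ = ν := by
            have h : πL.map Prod.snd + πR.map Prod.snd + Eν
                = (νL' + πL.map Prod.snd) + (νR' + πR.map Prod.snd) := by rw [hEν]; abel
            rw [h, hsumνL, hsumνR, hνLdef, hνRdef, hres ν hν]
    · -- mass lower bound
      have hEμge : μ Set.univ - (πL Set.univ + πR Set.univ) ≤ Eμ Set.univ := by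
        rw [hEμ, Measure.add_apply, hμLu, hμRu, ← hxsum]
        exact add_tsub_add_le_tsub_add_tsub
      have hEνge : ν Set.univ - (πL Set.univ + πR Set.univ) ≤ Eν Set.univ := by
        rw [hEν, Measure.add_apply, hνLu, hνRu, ← hysum]
        exact add_tsub_add_le_tsub_add_tsub
      have hminge : min (μ Set.univ) (ν Set.univ) - (πL Set.univ + πR Set.univ)
          ≤ min (Eμ Set.univ) (Eν Set.univ) := by
        refine le_min ((tsub_le_tsub_right (min_le_left _ _) _).trans hEμge)
          ((tsub_le_tsub_right (min_le_right _ _) _).trans hEνge)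
      calc min (μ Set.univ) (ν Set.univ)
          ≤ (min (μ Set.univ) (ν Set.univ) - (πL Set.univ + πR Set.univ))
            + (πL Set.univ + πR Set.univ) := le_tsub_add
        _ ≤ min (Eμ Set.univ) (Eν Set.univ) + (πL Set.univ + πR Set.univ) :=
            add_le_add_left hminge _
        _ = (πL + πR + π3) Set.univ := by
            rw [show (πL + πR + π3) Set.univ = πL Set.univ + πR Set.univ + π3 Set.univ by
              rw [Measure.add_apply (πL + πR) π3, Measure.add_apply πL πR], hm3]
            abel
    · -- cost bound
      rw [lintegral_add_measure, lintegral_add_measure]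
      have hC : ENNReal.ofReal (len / 2) = ENNReal.ofReal len * 2⁻¹ := by
        rw [show len / 2 = len * (1 / 2) by ring, ENNReal.ofReal_mul hlen, ofReal_half]
      set C := ENNReal.ofReal len with hCdef
      set S := min (μL Set.univ) (νL Set.univ) with hS
      set T := min (μR Set.univ) (νR Set.univ) with hT
      have hST : S + T ≤ min (μ Set.univ) (ν Set.univ) := by
        refine le_min ?_ ?_
        · rw [← hxsum]; exact add_le_add (min_le_left _ _) (min_le_left _ _)
        · rw [← hysum]; exact add_le_add (min_le_right _ _) (min_le_right _ _)
      calc ∫⁻ z, ENNReal.ofReal |z.1 - z.2| ∂πL + ∫⁻ z, ENNReal.ofReal |z.1 - z.2| ∂πR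
            + ∫⁻ z, ENNReal.ofReal |z.1 - z.2| ∂π3
          ≤ (C * 2⁻¹) * ((2⁻¹ : ℝ≥0∞) ^ Lev * S + 2 * Lev * D)
            + (C * 2⁻¹) * ((2⁻¹ : ℝ≥0∞) ^ Lev * T + 2 * Lev * D) + C * (2 * D) := by
            refine add_le_add (add_le_add (hL4.trans (le_of_eq (by rw [hC])))
              (hR4.trans (le_of_eq (by rw [hC])))) (hm4.trans ?_)
            exact mul_le_mul_right ((min_le_left _ _).trans hEμu2D) _
        _ = C * ((2⁻¹ : ℝ≥0∞) ^ (Lev + 1) * (S + T) + (2⁻¹ + 2⁻¹) * (2 * Lev * D) + 2 * D) := by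
            ring
        _ = C * ((2⁻¹ : ℝ≥0∞) ^ (Lev + 1) * (S + T) + 2 * Lev * D + 2 * D) := by
            rw [ENNReal.inv_two_add_inv_two, one_mul]
        _ ≤ C * ((2⁻¹ : ℝ≥0∞) ^ (Lev + 1) * min (μ Set.univ) (ν Set.univ)
              + 2 * Lev * D + 2 * D) := by gcongr
        _ = C * ((2⁻¹ : ℝ≥0∞) ^ (Lev + 1) * min (μ Set.univ) (ν Set.univ)
              + 2 * (Lev + 1 : ℕ) * D) := by push_cast; ring

/-- Coupling of two finite measures of equal mass by (normalized) product. -/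
lemma remainder_coupling (μ ν : Measure ℝ) [IsFiniteMeasure μ] [IsFiniteMeasure ν]
    (hm : μ Set.univ = ν Set.univ) :
    ∃ π : Measure (ℝ × ℝ), π.map Prod.fst = μ ∧ π.map Prod.snd = ν ∧
      ∫⁻ z, ENNReal.ofReal |z.1 - z.2| ∂π ≤
        ∫⁻ x, ENNReal.ofReal |x| ∂μ + ∫⁻ x, ENNReal.ofReal |x| ∂ν := by
  rcases eq_or_ne (μ Set.univ) 0 with h0 | h0
  · have hμ0 : μ = 0 := Measure.measure_univ_eq_zero.1 h0
    have hν0 : ν = 0 := Measure.measure_univ_eq_zero.1 (hm ▸ h0)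
    refine ⟨0, ?_, ?_, ?_⟩ <;> simp [hμ0, hν0, Measure.map_zero]
  · have hst := measure_ne_top μ Set.univ
    set s := μ Set.univ with hs
    refine ⟨s⁻¹ • μ.prod ν, ?_, ?_, ?_⟩
    · rw [Measure.map_smul, Measure.map_fst_prod, ← hm, smul_smul,
        ENNReal.inv_mul_cancel h0 hst, one_smul]
    · rw [Measure.map_smul, Measure.map_snd_prod, smul_smul,
        ENNReal.inv_mul_cancel h0 hst, one_smul]
    · have habs : ∀ z : ℝ × ℝ, ENNReal.ofReal |z.1 - z.2|
          ≤ ENNReal.ofReal |z.1| + ENNReal.ofReal |z.2| := by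
        intro z
        refine le_trans (ENNReal.ofReal_le_ofReal ?_) ENNReal.ofReal_add_le
        calc |z.1 - z.2| = |z.1 + -z.2| := by rw [sub_eq_add_neg]
          _ ≤ |z.1| + |-z.2| := abs_add_le _ _
          _ = |z.1| + |z.2| := by rw [abs_neg]
      have hmeas : Measurable fun x : ℝ => ENNReal.ofReal |x| :=
        (continuous_abs.measurable).ennreal_ofReal
      calc ∫⁻ z, ENNReal.ofReal |z.1 - z.2| ∂(s⁻¹ • μ.prod ν)
          ≤ ∫⁻ z, (ENNReal.ofReal |z.1| + ENNReal.ofReal |z.2|) ∂(s⁻¹ • μ.prod ν) :=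
            lintegral_mono habs
        _ = ∫⁻ z, ENNReal.ofReal |z.1| ∂(s⁻¹ • μ.prod ν)
            + ∫⁻ z, ENNReal.ofReal |z.2| ∂(s⁻¹ • μ.prod ν) :=
            lintegral_add_left (hmeas.comp measurable_fst) _
        _ = ∫⁻ x, ENNReal.ofReal |x| ∂((s⁻¹ • μ.prod ν).map Prod.fst)
            + ∫⁻ x, ENNReal.ofReal |x| ∂((s⁻¹ • μ.prod ν).map Prod.snd) := by
            rw [lintegral_map hmeas measurable_fst, lintegral_map hmeas measurable_snd]
        _ = ∫⁻ x, ENNReal.ofReal |x| ∂μ + ∫⁻ x, ENNReal.ofReal |x| ∂ν := by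
            rw [Measure.map_smul, Measure.map_fst_prod, ← hm, smul_smul,
              ENNReal.inv_mul_cancel h0 hst, one_smul,
              Measure.map_smul, Measure.map_snd_prod, smul_smul,
              ENNReal.inv_mul_cancel h0 hst, one_smul]


lemma dyadicB_subset (m : ℕ) : dyadicB m ⊆ Set.Ioc (-(2 : ℝ) ^ m) ((2 : ℝ) ^ m) := by
  cases m with
  | zero => simp [dyadicB]
  | succ k => exact Set.diff_subset

lemma dyadicB_meas (m : ℕ) : MeasurableSet (dyadicB m) := by
  cases m with
  | zero => exact measurableSet_Ioc
  | succ k => exact measurableSet_Ioc.diff measurableSet_Ioc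

lemma Ioc_pow_mono {m n : ℕ} (h : m ≤ n) :
    Set.Ioc (-(2 : ℝ) ^ m) ((2 : ℝ) ^ m) ⊆ Set.Ioc (-(2 : ℝ) ^ n) ((2 : ℝ) ^ n) := by
  have hp : (2 : ℝ) ^ m ≤ 2 ^ n := pow_le_pow_right₀ (by norm_num) h
  exact Set.Ioc_subset_Ioc (by linarith) hp

lemma dyadicB_disjoint {m n : ℕ} (h : m < n) : Disjoint (dyadicB m) (dyadicB n) := by
  obtain ⟨k, rfl⟩ : ∃ k, n = k + 1 := ⟨n - 1, by omega⟩
  have hsub : dyadicB m ⊆ Set.Ioc (-(2 : ℝ) ^ k) ((2 : ℝ) ^ k) :=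
    (dyadicB_subset m).trans (Ioc_pow_mono (by omega))
  exact Set.disjoint_of_subset_left hsub Set.disjoint_sdiff_right

lemma dyadicB_pairwise : Pairwise (Function.onFun Disjoint (fun k => dyadicB k)) := by
  intro m n hmn
  rcases lt_or_gt_of_ne hmn with h | h
  · exact dyadicB_disjoint h
  · exact (dyadicB_disjoint h).symm

lemma abs_le_of_mem_dyadicB {m : ℕ} {x : ℝ} (hx : x ∈ dyadicB m) : |x| ≤ 2 ^ m := by
  have h := dyadicB_subset m hx
  rw [abs_le]
  exact ⟨by linarith [h.1], h.2⟩

lemma dyadicB_succ (m : ℕ) : dyadicB (m + 1) = Set.Ioc (-(2 : ℝ) ^ (m + 1)) ((2 : ℝ) ^ (m + 1))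
    \ Set.Ioc (-(2 : ℝ) ^ m) ((2 : ℝ) ^ m) := rfl

lemma restrict_dyadicB_sum (κ : Measure ℝ) (M : ℕ) :
    (∑ m ∈ Finset.range (M + 1), κ.restrict (dyadicB m))
      = κ.restrict (Set.Ioc (-(2 : ℝ) ^ M) ((2 : ℝ) ^ M)) := by
  induction M with
  | zero => simp [dyadicB]
  | succ M ih =>
    have hd : Disjoint (Set.Ioc (-(2:ℝ)^M) ((2:ℝ)^M)) (dyadicB (M + 1)) := by
      rw [dyadicB_succ]; exact Set.disjoint_sdiff_right
    rw [Finset.sum_range_succ, ih, ← Measure.restrict_union hd (dyadicB_meas (M + 1))]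
    congr 1
    rw [dyadicB_succ, Set.union_diff_cancel (Ioc_pow_mono (Nat.le_succ M))]

lemma mem_Ioc_pow_mono {m n : ℕ} (h : m ≤ n) {x : ℝ}
    (hx : x ∈ Set.Ioc (-(2 : ℝ) ^ m) ((2 : ℝ) ^ m)) :
    x ∈ Set.Ioc (-(2 : ℝ) ^ n) ((2 : ℝ) ^ n) := Ioc_pow_mono h hx

lemma compl_Ioc_eq_iUnion (M : ℕ) :
    (Set.Ioc (-(2 : ℝ) ^ M) ((2 : ℝ) ^ M))ᶜ = ⋃ k : ℕ, dyadicB (M + 1 + k) := by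
  apply Set.eq_of_subset_of_subset
  · intro x hx
    have hex : ∃ n : ℕ, x ∈ Set.Ioc (-(2 : ℝ) ^ n) ((2 : ℝ) ^ n) := by
      obtain ⟨n, hn⟩ := pow_unbounded_of_one_lt |x| (by norm_num : (1:ℝ) < 2)
      exact ⟨n, by rw [Set.mem_Ioc]; rw [abs_lt] at hn; exact ⟨by linarith [hn.1], le_of_lt hn.2⟩⟩
    set n₀ := Nat.find hex with hn₀
    have hspec := Nat.find_spec hex
    have hML : M < n₀ := by
      by_contra hc
      push_neg at hc
      exact hx (mem_Ioc_pow_mono hc hspec)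
    obtain ⟨k, hk⟩ : ∃ k, n₀ = M + 1 + k := ⟨n₀ - (M + 1), by omega⟩
    refine Set.mem_iUnion.2 ⟨k, ?_⟩
    rw [← hk]
    obtain ⟨p, hp⟩ : ∃ p, n₀ = p + 1 := ⟨n₀ - 1, by omega⟩
    rw [hp]
    refine ⟨by rw [← hp]; exact hspec, ?_⟩
    have := Nat.find_min hex (m := p) (by omega)
    simpa using this
  · refine Set.iUnion_subset fun k => ?_
    have heq : M + 1 + k = (M + k) + 1 := by omega
    have : Disjoint (Set.Ioc (-(2 : ℝ) ^ M) ((2 : ℝ) ^ M)) (dyadicB (M + 1 + k)) := by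
      rw [heq, dyadicB_succ]
      exact Set.disjoint_of_subset_left (Ioc_pow_mono (by omega)) Set.disjoint_sdiff_right
    exact (Set.subset_compl_iff_disjoint_left).2 this

lemma preimage_div_Ioc (m : ℕ) (c d : ℝ) :
    (fun x : ℝ => x / (2 : ℝ) ^ m) ⁻¹' Set.Ioc c d
      = Set.Ioc (c * 2 ^ m) (d * 2 ^ m) := by
  have hpos : (0 : ℝ) < 2 ^ m := by positivity
  ext x
  simp only [Set.mem_preimage, Set.mem_Ioc, lt_div_iff₀ hpos, div_le_iff₀ hpos]

lemma rpow_one_sub (l : ℕ) : (2 : ℝ) ^ ((1 : ℝ) - l) = 2 / 2 ^ l := by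
  rw [Real.rpow_sub (by norm_num), Real.rpow_one, Real.rpow_natCast]

lemma cell_eq (m l j : ℕ) :
    subcell (-(2 : ℝ) ^ m) (2 * 2 ^ m) l j
      = (fun x : ℝ => x / (2 : ℝ) ^ m) ⁻¹' dyadicCell l j := by
  rw [dyadicCell, preimage_div_Ioc, subcell_def, rpow_one_sub]
  have hpos : (0 : ℝ) < 2 ^ l := by positivity
  congr 1 <;> field_simp <;> ring

lemma cellInAnnulus_eq (m l j : ℕ) :
    cellInAnnulus m l j = subcell (-(2 : ℝ) ^ m) (2 * 2 ^ m) l j ∩ dyadicB m := by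
  rw [cellInAnnulus, cell_eq]

lemma cell_zero_zero (m : ℕ) : cellInAnnulus m 0 0 = dyadicB m := by
  rw [cellInAnnulus_eq, subcell_def]
  have h : subcell (-(2 : ℝ) ^ m) (2 * 2 ^ m) 0 0 = Set.Ioc (-(2 : ℝ) ^ m) ((2 : ℝ) ^ m) := by
    rw [subcell_def]
    norm_num
    congr 1
    ring
  rw [← subcell_def, h, Set.inter_eq_self_of_subset_right (dyadicB_subset m)]


lemma tsub_comm_abs (x y : ℝ≥0∞) (hx : x ≠ ⊤) (hy : y ≠ ⊤) :
    (x - y) + (y - x) = ENNReal.ofReal |x.toReal - y.toReal| := by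
  rcases le_total x y with h | h
  · have h' : x.toReal ≤ y.toReal := ENNReal.toReal_mono hy h
    rw [tsub_eq_zero_of_le h, zero_add, abs_of_nonpos (by linarith), neg_sub,
      ENNReal.ofReal_sub _ ENNReal.toReal_nonneg, ENNReal.ofReal_toReal hy,
      ENNReal.ofReal_toReal hx]
  · have h' : y.toReal ≤ x.toReal := ENNReal.toReal_mono hx h
    rw [tsub_eq_zero_of_le h, add_zero, abs_of_nonneg (by linarith),
      ENNReal.ofReal_sub _ ENNReal.toReal_nonneg, ENNReal.ofReal_toReal hy,
      ENNReal.ofReal_toReal hx]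

lemma excess_add_le (a b c : ℝ≥0∞) (h : min a b ≤ c) :
    (a - c) + (b - c) ≤ (a - b) + (b - a) := by
  rcases le_total a b with hab | hab
  · have h1 : a ≤ c := le_trans (le_of_eq (min_eq_left hab).symm) h
    rw [tsub_eq_zero_of_le h1, zero_add]
    exact le_add_left (tsub_le_tsub_left h1 b)
  · have h1 : b ≤ c := le_trans (le_of_eq (min_eq_right hab).symm) h
    rw [tsub_eq_zero_of_le h1, add_zero]
    exact le_add_right (tsub_le_tsub_left h1 a)

lemma tsum_half_pow : (∑' k : ℕ, ((2 : ℝ≥0∞)⁻¹) ^ (k + 1)) = 1 := by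
  have h1 : (1 : ℝ≥0∞) - 2⁻¹ = 2⁻¹ := by
    rw [← ENNReal.inv_two_add_inv_two]
    exact ENNReal.add_sub_cancel_right (by norm_num)
  calc (∑' k : ℕ, ((2 : ℝ≥0∞)⁻¹) ^ (k + 1)) = ∑' k : ℕ, 2⁻¹ * 2⁻¹ ^ k := by
        congr 1; funext k; rw [pow_succ']
    _ = 2⁻¹ * ∑' k : ℕ, (2 : ℝ≥0∞)⁻¹ ^ k := ENNReal.tsum_mul_left
    _ = 2⁻¹ * (1 - 2⁻¹)⁻¹ := by rw [ENNReal.tsum_geometric]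
    _ = 1 := by rw [h1]; exact ENNReal.mul_inv_cancel (by norm_num) (by norm_num)

lemma ofReal_inv_two_pow (L : ℕ) :
    ((2 : ℝ≥0∞)⁻¹) ^ L = ENNReal.ofReal ((2 : ℝ) ^ (-(L : ℝ))) := by
  rw [Real.rpow_neg (by norm_num), Real.rpow_natCast,
    ENNReal.ofReal_inv_of_pos (by positivity), ENNReal.ofReal_pow (by norm_num),
    ← ENNReal.inv_pow]
  norm_num

-- geometric sum bounds
lemma geom_sum_le_of_r {r : ℝ} (h0 : 0 ≤ r) (h1 : r < 1) (n : ℕ) :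
    ∑ m ∈ Finset.range n, r ^ m ≤ (1 - r)⁻¹ := by
  have := tsum_geometric_of_lt_one h0 h1
  rw [← this]
  exact Summable.sum_le_tsum (Finset.range n) (fun m _ => by positivity)
    ((summable_geometric_of_lt_one h0 h1))

lemma geom_sum_two_delta {δ : ℝ} (hδ : 0 < δ) (n : ℕ) :
    ∑ m ∈ Finset.range n, (2 : ℝ) ^ (m : ℕ) * (2 : ℝ) ^ (-(2 + δ) * m) ≤ 2 := by
  have hterm : ∀ m : ℕ, (2 : ℝ) ^ (m : ℕ) * (2 : ℝ) ^ (-(2 + δ) * m)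
      = ((2 : ℝ) ^ (-(1 + δ))) ^ m := by
    intro m
    rw [← Real.rpow_natCast (2 : ℝ) m, ← Real.rpow_add (by norm_num),
      ← Real.rpow_natCast ((2 : ℝ) ^ (-(1 + δ))) m, ← Real.rpow_mul (by norm_num)]
    ring_nf
  have hr0 : (0 : ℝ) ≤ (2 : ℝ) ^ (-(1 + δ)) := le_of_lt (Real.rpow_pos_of_pos (by norm_num) _)
  have hrhalf : (2 : ℝ) ^ (-(1 + δ)) ≤ 1 / 2 := by
    have := Real.rpow_le_rpow_of_exponent_le (x := (2:ℝ)) (by norm_num)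
      (show -(1 + δ) ≤ -1 by linarith)
    calc (2 : ℝ) ^ (-(1 + δ)) ≤ (2 : ℝ) ^ (-1 : ℝ) := this
      _ = 1 / 2 := by rw [Real.rpow_neg_one]; norm_num
  calc ∑ m ∈ Finset.range n, (2 : ℝ) ^ (m : ℕ) * (2 : ℝ) ^ (-(2 + δ) * m)
      = ∑ m ∈ Finset.range n, ((2 : ℝ) ^ (-(1 + δ))) ^ m := by
        exact Finset.sum_congr rfl (fun m _ => hterm m)
    _ ≤ (1 - (2 : ℝ) ^ (-(1 + δ)))⁻¹ := geom_sum_le_of_r hr0 (by linarith) n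
    _ ≤ 2 := by
        rw [show (2 : ℝ) = ((1 : ℝ) / 2)⁻¹ by norm_num]
        apply inv_anti₀ (by norm_num)
        linarith

lemma geom_sum_alpha {α : ℝ} (hα : 0 < α) (n : ℕ) :
    ∑ m ∈ Finset.range n, (2 : ℝ) ^ (m : ℕ) * (2 + α) ^ (-(m : ℝ)) ≤ (2 + α) / α := by
  have h2α : (0 : ℝ) < 2 + α := by linarith
  have hterm : ∀ m : ℕ, (2 : ℝ) ^ (m : ℕ) * (2 + α) ^ (-(m : ℝ)) = (2 / (2 + α)) ^ m := by
    intro m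
    rw [Real.rpow_neg h2α.le, Real.rpow_natCast, div_pow]
    rw [div_eq_mul_inv]
  have hr0 : (0 : ℝ) ≤ 2 / (2 + α) := by positivity
  have hr1 : 2 / (2 + α) < 1 := by rw [div_lt_one h2α]; linarith
  calc ∑ m ∈ Finset.range n, (2 : ℝ) ^ (m : ℕ) * (2 + α) ^ (-(m : ℝ))
      = ∑ m ∈ Finset.range n, ((2 : ℝ) / (2 + α)) ^ m :=
        Finset.sum_congr rfl (fun m _ => hterm m)
    _ ≤ (1 - 2 / (2 + α))⁻¹ := geom_sum_le_of_r hr0 hr1 n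
    _ = (2 + α) / α := by
        rw [show (1 : ℝ) - 2 / (2 + α) = α / (2 + α) by field_simp; ring]
        rw [inv_div]

lemma measure_map_finset_sum {X Y : Type*} [MeasurableSpace X] [MeasurableSpace Y]
    (g : X → Y) (hg : Measurable g) (s : Finset ℕ) (κ : ℕ → Measure X) :
    (∑ i ∈ s, κ i).map g = ∑ i ∈ s, (κ i).map g := by
  classical
  induction s using Finset.induction_on with
  | empty => simp
  | insert _ _ hx ih =>
    rw [Finset.sum_insert hx, Finset.sum_insert hx, Measure.map_add _ _ hg, ih]

lemma lintegral_abs_le_of_null (κ : Measure ℝ) (m : ℕ) (hnull : κ (dyadicB m)ᶜ = 0) :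
    ∫⁻ x, ENNReal.ofReal |x| ∂κ ≤ ENNReal.ofReal ((2 : ℝ) ^ m) * κ Set.univ := by
  have hae : ∀ᵐ x ∂κ, ENNReal.ofReal |x| ≤ ENNReal.ofReal ((2 : ℝ) ^ m) := by
    rw [ae_iff]
    refine measure_mono_null ?_ hnull
    intro x hx hmem
    exact hx (ENNReal.ofReal_le_ofReal (abs_le_of_mem_dyadicB hmem))
  calc ∫⁻ x, ENNReal.ofReal |x| ∂κ ≤ ∫⁻ _, ENNReal.ofReal ((2 : ℝ) ^ m) ∂κ :=
        lintegral_mono_ae hae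
    _ = ENNReal.ofReal ((2 : ℝ) ^ m) * κ Set.univ := lintegral_const _

set_option maxHeartbeats 2000000 in
/-- For `p = 1`: under the tail bounds `P(B_m)+Q(B_m) ≤ K 2^{-(2+δ)m}` and the
cellwise closeness `|P(π_m⁻¹F ∩ B_m) - Q(π_m⁻¹F ∩ B_m)| ≤ K (2+α)^{-m} ε` for
`m ≤ M`, `F ∈ 𝒫_l`, `l ≤ L`, one has
`W_1(P,Q) ≤ K'(2^{-L} + L ε + 2^{-(1+δ)M})` with `K'` depending only on `α, K`. -/
theorem W1_le_of_tail_and_cell_bounds (α K : ℝ) (hα : 0 < α) (hK : 0 < K) :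
    ∃ K' : ℝ, 0 < K' ∧
      ∀ (δ ε : ℝ), 0 < δ → 0 < ε → ∀ (M L : ℕ), 1 ≤ M → 1 ≤ L →
        ∀ (P Q : Measure ℝ), IsProbabilityMeasure P → IsProbabilityMeasure Q →
          (∀ m : ℕ, (P (dyadicB m)).toReal + (Q (dyadicB m)).toReal
              ≤ K * (2 : ℝ) ^ (-(2 + δ) * m)) →
          (∀ m ≤ M, ∀ l ≤ L, ∀ j < 2 ^ l,
            |(P (cellInAnnulus m l j)).toReal - (Q (cellInAnnulus m l j)).toReal|
              ≤ K * (2 + α) ^ (-(m : ℝ)) * ε) →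
          WpPow 1 P Q ≤ ENNReal.ofReal (K' *
            ((2 : ℝ) ^ (-(L : ℝ)) + L * ε + (2 : ℝ) ^ (-(1 + δ) * M))) := by
  have h2α : (0 : ℝ) < 2 + α := by linarith
  refine ⟨20 * K * ((2 + α) / α), by positivity, ?_⟩
  intro δ ε hδ hε M L hM hL P Q hP hQ htail hcell
  -- measure bounds in ENNReal form
  have hPB : ∀ m : ℕ, P (dyadicB m) ≤ ENNReal.ofReal (K * (2 : ℝ) ^ (-(2 + δ) * (m : ℕ))) := by
    intro m
    rw [← ENNReal.ofReal_toReal (measure_ne_top P (dyadicB m))]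
    refine ENNReal.ofReal_le_ofReal ?_
    have := htail m
    have h0 : (0 : ℝ) ≤ (Q (dyadicB m)).toReal := ENNReal.toReal_nonneg
    linarith
  have hPQB : ∀ m : ℕ, P (dyadicB m) + Q (dyadicB m)
      ≤ ENNReal.ofReal (K * (2 : ℝ) ^ (-(2 + δ) * (m : ℕ))) := by
    intro m
    rw [← ENNReal.ofReal_toReal (measure_ne_top P (dyadicB m)),
      ← ENNReal.ofReal_toReal (measure_ne_top Q (dyadicB m)),
      ← ENNReal.ofReal_add ENNReal.toReal_nonneg ENNReal.toReal_nonneg]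
    exact ENNReal.ofReal_le_ofReal (htail m)
  -- the ddist bound on cells
  have hdd : ∀ m, m ≤ M → ∀ l ≤ L, ∀ j < 2 ^ l,
      ddist (P.restrict (dyadicB m)) (Q.restrict (dyadicB m))
        (subcell (-(2 : ℝ) ^ m) (2 * 2 ^ m) l j)
        ≤ ENNReal.ofReal (K * (2 + α) ^ (-(m : ℝ)) * ε) := by
    intro m hm l hl j hj
    have hPs : (P.restrict (dyadicB m)) (subcell (-(2 : ℝ) ^ m) (2 * 2 ^ m) l j)
        = P (cellInAnnulus m l j) := by
      rw [Measure.restrict_apply (subcell_meas _ _ _ _), ← cellInAnnulus_eq]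
    have hQs : (Q.restrict (dyadicB m)) (subcell (-(2 : ℝ) ^ m) (2 * 2 ^ m) l j)
        = Q (cellInAnnulus m l j) := by
      rw [Measure.restrict_apply (subcell_meas _ _ _ _), ← cellInAnnulus_eq]
    unfold ddist
    rw [hPs, hQs, tsub_comm_abs _ _ (measure_ne_top _ _) (measure_ne_top _ _)]
    exact ENNReal.ofReal_le_ofReal (hcell m hm l hl j hj)
  -- the per-annulus couplings
  have hex : ∀ m : ℕ, ∃ π : Measure (ℝ × ℝ),
      π.map Prod.fst ≤ P.restrict (dyadicB m) ∧
      π.map Prod.snd ≤ Q.restrict (dyadicB m) ∧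
      min (P (dyadicB m)) (Q (dyadicB m)) ≤ π Set.univ ∧
      (m ≤ M → ∫⁻ z, ENNReal.ofReal |z.1 - z.2| ∂π ≤
        ENNReal.ofReal (2 * 2 ^ m) * ((2⁻¹ : ℝ≥0∞) ^ L * min (P (dyadicB m)) (Q (dyadicB m))
          + 2 * L * ENNReal.ofReal (K * (2 + α) ^ (-(m : ℝ)) * ε))) := by
    intro m
    have hIoc : Set.Ioc (-(2 : ℝ) ^ m) (-(2 : ℝ) ^ m + 2 * 2 ^ m)
        = Set.Ioc (-(2 : ℝ) ^ m) ((2 : ℝ) ^ m) := by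
      congr 1
      ring
    have hempty : (Set.Ioc (-(2 : ℝ) ^ m) ((2 : ℝ) ^ m))ᶜ ∩ dyadicB m = ∅ := by
      rw [Set.eq_empty_iff_forall_notMem]
      rintro x ⟨h1, h2⟩
      exact h1 (dyadicB_subset m h2)
    have hPnull : (P.restrict (dyadicB m)) (Set.Ioc (-(2 : ℝ) ^ m) ((2 : ℝ) ^ m))ᶜ = 0 := by
      rw [Measure.restrict_apply measurableSet_Ioc.compl, hempty, measure_empty]
    have hQnull : (Q.restrict (dyadicB m)) (Set.Ioc (-(2 : ℝ) ^ m) ((2 : ℝ) ^ m))ᶜ = 0 := by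
      rw [Measure.restrict_apply measurableSet_Ioc.compl, hempty, measure_empty]
    have hPu : (P.restrict (dyadicB m)) Set.univ = P (dyadicB m) := Measure.restrict_apply_univ _
    have hQu : (Q.restrict (dyadicB m)) Set.univ = Q (dyadicB m) := Measure.restrict_apply_univ _
    rcases le_or_gt m M with hm | hm
    · obtain ⟨π, h1, h2, h3, h4⟩ := interval_coupling L (-(2 : ℝ) ^ m) (2 * 2 ^ m)
        (by positivity) (ENNReal.ofReal (K * (2 + α) ^ (-(m : ℝ)) * ε))
        (P.restrict (dyadicB m)) (Q.restrict (dyadicB m)) inferInstance inferInstance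
        (by rwa [hIoc]) (by rwa [hIoc])
        (fun l h1l h2l j hj => hdd m hm l h2l j hj)
      exact ⟨π, h1, h2, by rwa [hPu, hQu] at h3, fun _ => by rwa [hPu, hQu] at h4⟩
    · obtain ⟨π, h1, h2, h3, h4⟩ := prod_coupling (P.restrict (dyadicB m))
        (Q.restrict (dyadicB m)) (Set.Ioc (-(2 : ℝ) ^ m) ((2 : ℝ) ^ m)) measurableSet_Ioc
        (2 * 2 ^ m)
        (fun x hx y hy => abs_sub_le_iff.2 ⟨by cases hx; cases hy; linarith,
          by cases hx; cases hy; linarith⟩) hPnull hQnull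
      refine ⟨π, h1, h2, ?_, fun hc => absurd hc (by omega)⟩
      rw [hPu, hQu] at h3
      exact le_of_eq h3.symm
  choose π hπ1 hπ2 hπ3 hπ4 using hex
  -- the leftover measures
  set Pm' : ℕ → Measure ℝ := fun m => P.restrict (dyadicB m) - (π m).map Prod.fst with hPm'def
  set Qm' : ℕ → Measure ℝ := fun m => Q.restrict (dyadicB m) - (π m).map Prod.snd with hQm'def
  set T : Set ℝ := (Set.Ioc (-(2 : ℝ) ^ M) ((2 : ℝ) ^ M))ᶜ with hTdef
  set P' : Measure ℝ := (∑ m ∈ Finset.range (M + 1), Pm' m) + P.restrict T with hP'def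
  set Q' : Measure ℝ := (∑ m ∈ Finset.range (M + 1), Qm' m) + Q.restrict T with hQ'def
  have hPm'add : ∀ m, Pm' m + (π m).map Prod.fst = P.restrict (dyadicB m) := by
    intro m
    haveI := isFiniteMeasure_of_le _ (hπ1 m)
    exact Measure.sub_add_cancel_of_le (hπ1 m)
  have hQm'add : ∀ m, Qm' m + (π m).map Prod.snd = Q.restrict (dyadicB m) := by
    intro m
    haveI := isFiniteMeasure_of_le _ (hπ2 m)
    exact Measure.sub_add_cancel_of_le (hπ2 m)
  have hπfu : ∀ m, ((π m).map Prod.fst) Set.univ = (π m) Set.univ := by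
    intro m
    rw [Measure.map_apply measurable_fst MeasurableSet.univ, Set.preimage_univ]
  have hπsu : ∀ m, ((π m).map Prod.snd) Set.univ = (π m) Set.univ := by
    intro m
    rw [Measure.map_apply measurable_snd MeasurableSet.univ, Set.preimage_univ]
  have hPm'u : ∀ m, Pm' m Set.univ = P (dyadicB m) - (π m) Set.univ := by
    intro m
    haveI := isFiniteMeasure_of_le _ (hπ1 m)
    rw [hPm'def]
    show (P.restrict (dyadicB m) - (π m).map Prod.fst) Set.univ = _
    rw [Measure.sub_apply MeasurableSet.univ (hπ1 m), hπfu m, Measure.restrict_apply_univ]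
  have hQm'u : ∀ m, Qm' m Set.univ = Q (dyadicB m) - (π m) Set.univ := by
    intro m
    haveI := isFiniteMeasure_of_le _ (hπ2 m)
    rw [hQm'def]
    show (Q.restrict (dyadicB m) - (π m).map Prod.snd) Set.univ = _
    rw [Measure.sub_apply MeasurableSet.univ (hπ2 m), hπsu m, Measure.restrict_apply_univ]
  -- mass identities
  have hmass : ∀ (R : Measure ℝ), IsProbabilityMeasure R →
      ∀ (Rm' : ℕ → Measure ℝ), (∀ m, Rm' m Set.univ = R (dyadicB m) - (π m) Set.univ) →
      (∀ m, (π m) Set.univ ≤ R (dyadicB m)) →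
      ((∑ m ∈ Finset.range (M + 1), Rm' m) + R.restrict T) Set.univ
        + (∑ m ∈ Finset.range (M + 1), (π m) Set.univ) = 1 := by
    intro R hR Rm' hRu hle
    rw [Measure.add_apply, Measure.finset_sum_apply, Measure.restrict_apply_univ]
    have h1 : (∑ m ∈ Finset.range (M + 1), Rm' m Set.univ) + R T
        + (∑ m ∈ Finset.range (M + 1), (π m) Set.univ)
        = (∑ m ∈ Finset.range (M + 1), (Rm' m Set.univ + (π m) Set.univ)) + R T := by
      rw [Finset.sum_add_distrib]
      ring
    rw [h1, Finset.sum_congr rfl (fun m _ => show Rm' m Set.univ + (π m) Set.univ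
        = R (dyadicB m) from by rw [hRu m]; exact tsub_add_cancel_of_le (hle m))]
    have h2 : (∑ m ∈ Finset.range (M + 1), R (dyadicB m))
        = R (Set.Ioc (-(2 : ℝ) ^ M) ((2 : ℝ) ^ M)) := by
      have h3 := restrict_dyadicB_sum R M
      have h4 := congrArg (fun κ : Measure ℝ => κ Set.univ) h3
      simpa [Measure.finset_sum_apply, Measure.restrict_apply_univ] using h4
    rw [h2, hTdef, measure_add_measure_compl measurableSet_Ioc, measure_univ]
  have hπleP : ∀ m, (π m) Set.univ ≤ P (dyadicB m) := by
    intro m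
    have := Measure.le_iff'.1 (hπ1 m) Set.univ
    rwa [hπfu m, Measure.restrict_apply_univ] at this
  have hπleQ : ∀ m, (π m) Set.univ ≤ Q (dyadicB m) := by
    intro m
    have := Measure.le_iff'.1 (hπ2 m) Set.univ
    rwa [hπsu m, Measure.restrict_apply_univ] at this
  have hmassP := hmass P hP Pm' hPm'u hπleP
  have hmassQ := hmass Q hQ Qm' hQm'u hπleQ
  have hSne : (∑ m ∈ Finset.range (M + 1), (π m) Set.univ) ≠ ⊤ := by
    intro hc
    rw [hc, add_top] at hmassP
    exact (by norm_num : (⊤ : ℝ≥0∞) ≠ 1) hmassP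
  have hPQ'u : P' Set.univ = Q' Set.univ := by
    have := hmassP.trans hmassQ.symm
    rw [add_comm (P' Set.univ), add_comm (Q' Set.univ)] at this
    exact (ENNReal.add_right_inj hSne).1 this
  haveI hP'fin : IsFiniteMeasure P' := by
    constructor
    calc P' Set.univ ≤ P' Set.univ + ∑ m ∈ Finset.range (M + 1), (π m) Set.univ :=
          self_le_add_right _ _
      _ = 1 := hmassP
      _ < ⊤ := one_lt_top
  haveI hQ'fin : IsFiniteMeasure Q' := by
    constructor
    calc Q' Set.univ ≤ Q' Set.univ + ∑ m ∈ Finset.range (M + 1), (π m) Set.univ :=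
          self_le_add_right _ _
      _ = 1 := hmassQ
      _ < ⊤ := one_lt_top
  obtain ⟨ρ, hρ1, hρ2, hρ3⟩ := remainder_coupling P' Q' hPQ'u
  -- the total coupling
  set πT : Measure (ℝ × ℝ) := (∑ m ∈ Finset.range (M + 1), π m) + ρ with hπTdef
  have hfst : πT.map Prod.fst = P := by
    rw [hπTdef, Measure.map_add _ _ measurable_fst, measure_map_finset_sum _ measurable_fst, hρ1, hP'def]
    have h1 : (∑ m ∈ Finset.range (M + 1), (π m).map Prod.fst)
        + ((∑ m ∈ Finset.range (M + 1), Pm' m) + P.restrict T)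
        = (∑ m ∈ Finset.range (M + 1), (Pm' m + (π m).map Prod.fst)) + P.restrict T := by
      rw [Finset.sum_add_distrib]
      abel
    rw [h1, Finset.sum_congr rfl (fun m _ => hPm'add m), restrict_dyadicB_sum, hTdef,
      Measure.restrict_add_restrict_compl measurableSet_Ioc]
  have hsnd : πT.map Prod.snd = Q := by
    rw [hπTdef, Measure.map_add _ _ measurable_snd, measure_map_finset_sum _ measurable_snd, hρ2, hQ'def]
    have h1 : (∑ m ∈ Finset.range (M + 1), (π m).map Prod.snd)
        + ((∑ m ∈ Finset.range (M + 1), Qm' m) + Q.restrict T)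
        = (∑ m ∈ Finset.range (M + 1), (Qm' m + (π m).map Prod.snd)) + Q.restrict T := by
      rw [Finset.sum_add_distrib]
      abel
    rw [h1, Finset.sum_congr rfl (fun m _ => hQm'add m), restrict_dyadicB_sum, hTdef,
      Measure.restrict_add_restrict_compl measurableSet_Ioc]
  -- cost of the annulus couplings
  have hcostA : ∫⁻ z, ENNReal.ofReal |z.1 - z.2| ∂(∑ m ∈ Finset.range (M + 1), π m)
      ≤ ENNReal.ofReal (4 * K * (2 : ℝ) ^ (-(L : ℝ))
        + 4 * K * L * ε * ((2 + α) / α)) := by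
    rw [lintegral_finset_sum_measure]
    have hx0 : (0 : ℝ) ≤ (2 : ℝ) ^ (-(L : ℝ)) := le_of_lt (Real.rpow_pos_of_pos (by norm_num) _)
    have hterm : ∀ m ∈ Finset.range (M + 1), ∫⁻ z, ENNReal.ofReal |z.1 - z.2| ∂(π m)
        ≤ ENNReal.ofReal (2 * 2 ^ m * ((2 : ℝ) ^ (-(L : ℝ)) * (K * (2 : ℝ) ^ (-(2 + δ) * (m : ℕ)))
          + 2 * (L : ℝ) * (K * (2 + α) ^ (-(m : ℝ)) * ε))) := by
      intro m hmr
      have hm : m ≤ M := Nat.lt_succ_iff.1 (Finset.mem_range.1 hmr)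
      have hy0 : (0 : ℝ) ≤ K * (2 : ℝ) ^ (-(2 + δ) * (m : ℕ)) := by positivity
      have hz0 : (0 : ℝ) ≤ K * (2 + α) ^ (-(m : ℝ)) * ε := by positivity
      refine (hπ4 m hm).trans ?_
      calc ENNReal.ofReal (2 * 2 ^ m) * ((2⁻¹ : ℝ≥0∞) ^ L * min (P (dyadicB m)) (Q (dyadicB m))
            + 2 * L * ENNReal.ofReal (K * (2 + α) ^ (-(m : ℝ)) * ε))
          ≤ ENNReal.ofReal (2 * 2 ^ m) * ((2⁻¹ : ℝ≥0∞) ^ L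
              * ENNReal.ofReal (K * (2 : ℝ) ^ (-(2 + δ) * (m : ℕ)))
            + 2 * L * ENNReal.ofReal (K * (2 + α) ^ (-(m : ℝ)) * ε)) := by
            gcongr
            exact (min_le_left _ _).trans (hPB m)
        _ = _ := by
            rw [ofReal_inv_two_pow,
              show ((2 : ℝ≥0∞)) * (L : ℝ≥0∞) * ENNReal.ofReal (K * (2 + α) ^ (-(m : ℝ)) * ε)
                = ENNReal.ofReal (2 * (L : ℝ) * (K * (2 + α) ^ (-(m : ℝ)) * ε)) by
                  rw [ENNReal.ofReal_mul (by positivity : (0:ℝ) ≤ 2 * (L : ℝ)),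
                    ENNReal.ofReal_mul (by norm_num : (0:ℝ) ≤ (2:ℝ))]
                  simp,
              ← ENNReal.ofReal_mul hx0, ← ENNReal.ofReal_add (by positivity) (by positivity),
              ← ENNReal.ofReal_mul (by positivity : (0:ℝ) ≤ 2 * (2:ℝ) ^ m)]
    calc (∑ m ∈ Finset.range (M + 1), ∫⁻ z, ENNReal.ofReal |z.1 - z.2| ∂(π m))
        ≤ ∑ m ∈ Finset.range (M + 1),
            ENNReal.ofReal (2 * 2 ^ m * ((2 : ℝ) ^ (-(L : ℝ))
              * (K * (2 : ℝ) ^ (-(2 + δ) * (m : ℕ)))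
              + 2 * (L : ℝ) * (K * (2 + α) ^ (-(m : ℝ)) * ε))) := Finset.sum_le_sum hterm
      _ = ENNReal.ofReal (∑ m ∈ Finset.range (M + 1),
            (2 * 2 ^ m * ((2 : ℝ) ^ (-(L : ℝ)) * (K * (2 : ℝ) ^ (-(2 + δ) * (m : ℕ)))
              + 2 * (L : ℝ) * (K * (2 + α) ^ (-(m : ℝ)) * ε)))) :=
          (ENNReal.ofReal_sum_of_nonneg (fun m _ => by positivity)).symm
      _ ≤ _ := by
          refine ENNReal.ofReal_le_ofReal ?_
          have hsplit : ∀ m ∈ Finset.range (M + 1),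
              2 * 2 ^ m * ((2 : ℝ) ^ (-(L : ℝ)) * (K * (2 : ℝ) ^ (-(2 + δ) * (m : ℕ)))
                + 2 * (L : ℝ) * (K * (2 + α) ^ (-(m : ℝ)) * ε))
              = (2 * K * (2 : ℝ) ^ (-(L : ℝ))) * ((2:ℝ) ^ m * (2 : ℝ) ^ (-(2 + δ) * (m : ℕ)))
                + (4 * K * (L : ℝ) * ε) * ((2:ℝ) ^ m * (2 + α) ^ (-(m : ℝ))) := by
            intro m _
            ring
          rw [Finset.sum_congr rfl hsplit, Finset.sum_add_distrib, ← Finset.mul_sum,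
            ← Finset.mul_sum]
          have g1 := geom_sum_two_delta hδ (M + 1)
          have g2 := geom_sum_alpha hα (M + 1)
          calc (2 * K * (2 : ℝ) ^ (-(L : ℝ)))
                * (∑ m ∈ Finset.range (M + 1), (2:ℝ) ^ m * (2 : ℝ) ^ (-(2 + δ) * (m : ℕ)))
                + (4 * K * (L : ℝ) * ε)
                  * (∑ m ∈ Finset.range (M + 1), (2:ℝ) ^ m * (2 + α) ^ (-(m : ℝ)))
              ≤ (2 * K * (2 : ℝ) ^ (-(L : ℝ))) * 2 + (4 * K * (L : ℝ) * ε) * ((2 + α) / α) := by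
                gcongr
            _ = 4 * K * (2 : ℝ) ^ (-(L : ℝ)) + 4 * K * L * ε * ((2 + α) / α) := by ring
  -- cost of the remainder coupling: excess part
  have habsmeas : Measurable fun x : ℝ => ENNReal.ofReal |x| :=
    continuous_abs.measurable.ennreal_ofReal
  have hexm : ∀ m ∈ Finset.range (M + 1),
      (∫⁻ x, ENNReal.ofReal |x| ∂(Pm' m)) + (∫⁻ x, ENNReal.ofReal |x| ∂(Qm' m))
        ≤ ENNReal.ofReal ((2:ℝ) ^ m * (K * (2 + α) ^ (-(m : ℝ)) * ε)) := by
    intro m hmr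
    have hm : m ≤ M := Nat.lt_succ_iff.1 (Finset.mem_range.1 hmr)
    have hBc : ∀ (R : Measure ℝ), (R.restrict (dyadicB m)) (dyadicB m)ᶜ = 0 := by
      intro R
      rw [Measure.restrict_apply (dyadicB_meas m).compl, Set.compl_inter_self, measure_empty]
    have hlep : Pm' m ≤ P.restrict (dyadicB m) := by
      rw [hPm'def]
      exact Measure.sub_le
    have hleq : Qm' m ≤ Q.restrict (dyadicB m) := by
      rw [hQm'def]
      exact Measure.sub_le
    have hPnull : Pm' m (dyadicB m)ᶜ = 0 := by
      refine le_antisymm ((Measure.le_iff'.1 hlep _).trans ?_) zero_le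
      rw [hBc P]
    have hQnull : Qm' m (dyadicB m)ᶜ = 0 := by
      refine le_antisymm ((Measure.le_iff'.1 hleq _).trans ?_) zero_le
      rw [hBc Q]
    have hudd : Pm' m Set.univ + Qm' m Set.univ
        ≤ ENNReal.ofReal (K * (2 + α) ^ (-(m : ℝ)) * ε) := by
      rw [hPm'u m, hQm'u m]
      refine (excess_add_le _ _ _ (hπ3 m)).trans ?_
      rw [tsub_comm_abs _ _ (measure_ne_top _ _) (measure_ne_top _ _)]
      refine ENNReal.ofReal_le_ofReal ?_
      have := hcell m hm 0 (by omega) 0 (by norm_num)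
      rwa [cell_zero_zero] at this
    calc (∫⁻ x, ENNReal.ofReal |x| ∂(Pm' m)) + (∫⁻ x, ENNReal.ofReal |x| ∂(Qm' m))
        ≤ ENNReal.ofReal ((2 : ℝ) ^ m) * Pm' m Set.univ
          + ENNReal.ofReal ((2 : ℝ) ^ m) * Qm' m Set.univ :=
          add_le_add (lintegral_abs_le_of_null _ m hPnull) (lintegral_abs_le_of_null _ m hQnull)
      _ = ENNReal.ofReal ((2 : ℝ) ^ m) * (Pm' m Set.univ + Qm' m Set.univ) := by rw [mul_add]
      _ ≤ ENNReal.ofReal ((2 : ℝ) ^ m) * ENNReal.ofReal (K * (2 + α) ^ (-(m : ℝ)) * ε) :=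
          mul_le_mul_right hudd _
      _ = ENNReal.ofReal ((2:ℝ) ^ m * (K * (2 + α) ^ (-(m : ℝ)) * ε)) := by
          rw [← ENNReal.ofReal_mul (by positivity)]
  have hExcess : (∑ m ∈ Finset.range (M + 1), ∫⁻ x, ENNReal.ofReal |x| ∂(Pm' m))
      + (∑ m ∈ Finset.range (M + 1), ∫⁻ x, ENNReal.ofReal |x| ∂(Qm' m))
      ≤ ENNReal.ofReal (K * ε * ((2 + α) / α)) := by
    rw [← Finset.sum_add_distrib]
    calc (∑ m ∈ Finset.range (M + 1), ((∫⁻ x, ENNReal.ofReal |x| ∂(Pm' m))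
          + (∫⁻ x, ENNReal.ofReal |x| ∂(Qm' m))))
        ≤ ∑ m ∈ Finset.range (M + 1),
            ENNReal.ofReal ((2:ℝ) ^ m * (K * (2 + α) ^ (-(m : ℝ)) * ε)) :=
          Finset.sum_le_sum hexm
      _ = ENNReal.ofReal (∑ m ∈ Finset.range (M + 1),
            (2:ℝ) ^ m * (K * (2 + α) ^ (-(m : ℝ)) * ε)) :=
          (ENNReal.ofReal_sum_of_nonneg (fun m _ => by positivity)).symm
      _ ≤ _ := by
          refine ENNReal.ofReal_le_ofReal ?_
          have hsplit : ∀ m ∈ Finset.range (M + 1),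
              (2:ℝ) ^ m * (K * (2 + α) ^ (-(m : ℝ)) * ε)
              = (K * ε) * ((2:ℝ) ^ m * (2 + α) ^ (-(m : ℝ))) := by intro m _; ring
          rw [Finset.sum_congr rfl hsplit, ← Finset.mul_sum]
          calc (K * ε) * (∑ m ∈ Finset.range (M + 1), (2:ℝ) ^ m * (2 + α) ^ (-(m : ℝ)))
              ≤ (K * ε) * ((2 + α) / α) := by
                have := geom_sum_alpha hα (M + 1)
                gcongr
            _ = K * ε * ((2 + α) / α) := by ring
  -- cost of the remainder coupling: tail part
  have htailterm : ∀ (R : Measure ℝ) (m : ℕ),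
      ∫⁻ x, ENNReal.ofReal |x| ∂(R.restrict (dyadicB m))
        ≤ ENNReal.ofReal ((2 : ℝ) ^ m) * R (dyadicB m) := by
    intro R m
    have hnull : (R.restrict (dyadicB m)) (dyadicB m)ᶜ = 0 := by
      rw [Measure.restrict_apply (dyadicB_meas m).compl, Set.compl_inter_self, measure_empty]
    have := lintegral_abs_le_of_null (R.restrict (dyadicB m)) m hnull
    rwa [Measure.restrict_apply_univ] at this
  have hTail : (∫⁻ x, ENNReal.ofReal |x| ∂(P.restrict T))
      + (∫⁻ x, ENNReal.ofReal |x| ∂(Q.restrict T))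
      ≤ ENNReal.ofReal (K * (2 : ℝ) ^ (-(1 + δ) * (M : ℝ))) := by
    have hdisj : Pairwise (Function.onFun Disjoint (fun k : ℕ => dyadicB (M + 1 + k))) := by
      intro i j hij
      exact dyadicB_pairwise (by omega : M + 1 + i ≠ M + 1 + j)
    have hrT : ∀ (R : Measure ℝ), ∫⁻ x, ENNReal.ofReal |x| ∂(R.restrict T)
        = ∑' k : ℕ, ∫⁻ x, ENNReal.ofReal |x| ∂(R.restrict (dyadicB (M + 1 + k))) := by
      intro R
      rw [hTdef, compl_Ioc_eq_iUnion]
      exact lintegral_iUnion (fun k => dyadicB_meas _) hdisj _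
    rw [hrT P, hrT Q, ← ENNReal.tsum_add]
    have hterm : ∀ k : ℕ,
        (∫⁻ x, ENNReal.ofReal |x| ∂(P.restrict (dyadicB (M + 1 + k))))
          + (∫⁻ x, ENNReal.ofReal |x| ∂(Q.restrict (dyadicB (M + 1 + k))))
        ≤ ENNReal.ofReal (K * (2 : ℝ) ^ (-(1 + δ) * (M : ℝ))) * (2⁻¹ : ℝ≥0∞) ^ (k + 1) := by
      intro k
      set m := M + 1 + k with hmdef
      have hreal : (2:ℝ) ^ (m : ℕ) * (K * (2 : ℝ) ^ (-(2 + δ) * (m : ℕ)))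
          ≤ (K * (2 : ℝ) ^ (-(1 + δ) * (M : ℝ))) * ((1 / 2 : ℝ)) ^ (k + 1) := by
        have e1 : (2:ℝ) ^ (m : ℕ) * (2:ℝ) ^ (-(2 + δ) * (m : ℕ))
            = (2:ℝ) ^ (-(1 + δ) * ((m : ℕ) : ℝ)) := by
          rw [← Real.rpow_natCast (2:ℝ) m, ← Real.rpow_add (by norm_num)]
          congr 1
          ring
        have e2 : -(1 + δ) * ((m : ℕ) : ℝ) ≤ -(1 + δ) * (M : ℝ) + -(((k : ℝ)) + 1) := by
          rw [hmdef]
          push_cast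
          nlinarith [mul_nonneg hδ.le (show (0:ℝ) ≤ (k : ℝ) + 1 by positivity)]
        have e3 : (2:ℝ) ^ (-(1 + δ) * ((m : ℕ) : ℝ))
            ≤ (2:ℝ) ^ (-(1 + δ) * (M : ℝ)) * ((1 / 2 : ℝ)) ^ (k + 1) := by
          calc (2:ℝ) ^ (-(1 + δ) * ((m : ℕ) : ℝ))
              ≤ (2:ℝ) ^ (-(1 + δ) * (M : ℝ) + -(((k : ℝ)) + 1)) :=
                Real.rpow_le_rpow_of_exponent_le (by norm_num) e2
            _ = (2:ℝ) ^ (-(1 + δ) * (M : ℝ)) * (2:ℝ) ^ (-(((k : ℝ)) + 1)) :=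
                Real.rpow_add (by norm_num) _ _
            _ = (2:ℝ) ^ (-(1 + δ) * (M : ℝ)) * ((1 / 2 : ℝ)) ^ (k + 1) := by
                congr 1
                rw [show -((k : ℝ) + 1) = -(((k + 1 : ℕ) : ℝ)) by push_cast; ring,
                  Real.rpow_neg (by norm_num), Real.rpow_natCast, one_div, inv_pow]
        calc (2:ℝ) ^ (m : ℕ) * (K * (2 : ℝ) ^ (-(2 + δ) * (m : ℕ)))
            = K * ((2:ℝ) ^ (m : ℕ) * (2:ℝ) ^ (-(2 + δ) * (m : ℕ))) := by ring
          _ = K * (2:ℝ) ^ (-(1 + δ) * ((m : ℕ) : ℝ)) := by rw [e1]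
          _ ≤ K * ((2:ℝ) ^ (-(1 + δ) * (M : ℝ)) * ((1 / 2 : ℝ)) ^ (k + 1)) := by
              exact mul_le_mul_of_nonneg_left e3 hK.le
          _ = (K * (2 : ℝ) ^ (-(1 + δ) * (M : ℝ))) * ((1 / 2 : ℝ)) ^ (k + 1) := by ring
      calc (∫⁻ x, ENNReal.ofReal |x| ∂(P.restrict (dyadicB m)))
            + (∫⁻ x, ENNReal.ofReal |x| ∂(Q.restrict (dyadicB m)))
          ≤ ENNReal.ofReal ((2 : ℝ) ^ m) * P (dyadicB m)
            + ENNReal.ofReal ((2 : ℝ) ^ m) * Q (dyadicB m) :=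
            add_le_add (htailterm P m) (htailterm Q m)
        _ = ENNReal.ofReal ((2 : ℝ) ^ m) * (P (dyadicB m) + Q (dyadicB m)) := by rw [mul_add]
        _ ≤ ENNReal.ofReal ((2 : ℝ) ^ m)
              * ENNReal.ofReal (K * (2 : ℝ) ^ (-(2 + δ) * (m : ℕ))) :=
            mul_le_mul_right (hPQB m) _
        _ = ENNReal.ofReal ((2:ℝ) ^ (m : ℕ) * (K * (2 : ℝ) ^ (-(2 + δ) * (m : ℕ)))) := by
            rw [← ENNReal.ofReal_mul (by positivity)]
        _ ≤ ENNReal.ofReal ((K * (2 : ℝ) ^ (-(1 + δ) * (M : ℝ))) * ((1 / 2 : ℝ)) ^ (k + 1)) :=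
            ENNReal.ofReal_le_ofReal hreal
        _ = ENNReal.ofReal (K * (2 : ℝ) ^ (-(1 + δ) * (M : ℝ))) * (2⁻¹ : ℝ≥0∞) ^ (k + 1) := by
            rw [ENNReal.ofReal_mul (by positivity), ENNReal.ofReal_pow (by norm_num), ofReal_half]
    calc (∑' k : ℕ, ((∫⁻ x, ENNReal.ofReal |x| ∂(P.restrict (dyadicB (M + 1 + k))))
          + (∫⁻ x, ENNReal.ofReal |x| ∂(Q.restrict (dyadicB (M + 1 + k))))))
        ≤ ∑' k : ℕ, ENNReal.ofReal (K * (2 : ℝ) ^ (-(1 + δ) * (M : ℝ))) * (2⁻¹ : ℝ≥0∞) ^ (k + 1) :=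
          ENNReal.tsum_le_tsum hterm
      _ = ENNReal.ofReal (K * (2 : ℝ) ^ (-(1 + δ) * (M : ℝ)))
            * ∑' k : ℕ, (2⁻¹ : ℝ≥0∞) ^ (k + 1) := ENNReal.tsum_mul_left
      _ = ENNReal.ofReal (K * (2 : ℝ) ^ (-(1 + δ) * (M : ℝ))) := by
          rw [tsum_half_pow, mul_one]
  -- total cost
  have hPQ'int : (∫⁻ x, ENNReal.ofReal |x| ∂P') + (∫⁻ x, ENNReal.ofReal |x| ∂Q')
      ≤ ENNReal.ofReal (K * ε * ((2 + α) / α))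
        + ENNReal.ofReal (K * (2 : ℝ) ^ (-(1 + δ) * (M : ℝ))) := by
    rw [hP'def, hQ'def, lintegral_add_measure, lintegral_add_measure,
      lintegral_finset_sum_measure, lintegral_finset_sum_measure]
    calc (∑ m ∈ Finset.range (M + 1), ∫⁻ x, ENNReal.ofReal |x| ∂(Pm' m))
          + (∫⁻ x, ENNReal.ofReal |x| ∂(P.restrict T))
          + ((∑ m ∈ Finset.range (M + 1), ∫⁻ x, ENNReal.ofReal |x| ∂(Qm' m))
          + (∫⁻ x, ENNReal.ofReal |x| ∂(Q.restrict T)))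
        = ((∑ m ∈ Finset.range (M + 1), ∫⁻ x, ENNReal.ofReal |x| ∂(Pm' m))
          + (∑ m ∈ Finset.range (M + 1), ∫⁻ x, ENNReal.ofReal |x| ∂(Qm' m)))
          + ((∫⁻ x, ENNReal.ofReal |x| ∂(P.restrict T))
          + (∫⁻ x, ENNReal.ofReal |x| ∂(Q.restrict T))) := by abel
      _ ≤ _ := add_le_add hExcess hTail
  have htotal : ∫⁻ z, ENNReal.ofReal |z.1 - z.2| ∂πT
      ≤ ENNReal.ofReal (4 * K * (2 : ℝ) ^ (-(L : ℝ)) + 4 * K * L * ε * ((2 + α) / α))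
        + (ENNReal.ofReal (K * ε * ((2 + α) / α))
        + ENNReal.ofReal (K * (2 : ℝ) ^ (-(1 + δ) * (M : ℝ)))) := by
    rw [hπTdef, lintegral_add_measure]
    exact add_le_add hcostA (hρ3.trans hPQ'int)
  -- conclude
  have hWle : WpPow 1 P Q ≤ ∫⁻ z, ENNReal.ofReal |z.1 - z.2| ∂πT := by
    have heq : ∫⁻ z, ENNReal.ofReal (|z.1 - z.2| ^ (1:ℝ)) ∂πT
        = ∫⁻ z, ENNReal.ofReal |z.1 - z.2| ∂πT := by
      simp_rw [Real.rpow_one]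
    calc WpPow 1 P Q ≤ ∫⁻ z, ENNReal.ofReal (|z.1 - z.2| ^ (1:ℝ)) ∂πT :=
          iInf_le_of_le πT (iInf_le_of_le hfst (iInf_le_of_le hsnd le_rfl))
      _ = _ := heq
  refine hWle.trans (htotal.trans ?_)
  have hx0 : (0 : ℝ) ≤ (2 : ℝ) ^ (-(L : ℝ)) := le_of_lt (Real.rpow_pos_of_pos (by norm_num) _)
  have hy0 : (0 : ℝ) ≤ (2 : ℝ) ^ (-(1 + δ) * (M : ℝ)) :=
    le_of_lt (Real.rpow_pos_of_pos (by norm_num) _)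
  rw [← ENNReal.ofReal_add (by positivity) (by positivity),
    ← ENNReal.ofReal_add (by positivity) (by positivity)]
  refine ENNReal.ofReal_le_ofReal ?_
  have hc1 : (1 : ℝ) ≤ (2 + α) / α := by
    rw [le_div_iff₀ hα]
    linarith
  have hL1 : (1 : ℝ) ≤ (L : ℝ) := by exact_mod_cast hL
  set x := (2 : ℝ) ^ (-(L : ℝ)) with hxdef
  set y := (2 : ℝ) ^ (-(1 + δ) * (M : ℝ)) with hydef
  set c := (2 + α) / α with hcdef
  have hc0 : (0 : ℝ) < c := by positivity
  have h1 : 4 * K * x ≤ 4 * K * c * x := by nlinarith [mul_nonneg hK.le hx0]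
  have h2 : K * ε * c ≤ K * (L : ℝ) * ε * c := by nlinarith [mul_nonneg (mul_nonneg hK.le hε.le) hc0.le]
  have h3 : K * y ≤ K * c * y := by nlinarith [mul_nonneg hK.le hy0]
  have hsum : 4 * K * x + 4 * K * (L:ℝ) * ε * c + (K * ε * c + K * y)
      ≤ 20 * K * c * (x + (L:ℝ) * ε + y) := by
    have hKc0 : 0 ≤ K * c := by positivity
    have p1 : 0 ≤ K * c * x := mul_nonneg hKc0 hx0
    have p2 : 0 ≤ K * c * ((L:ℝ) * ε) :=
      mul_nonneg hKc0 (mul_nonneg (le_trans zero_le_one hL1) hε.le)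
    have p3 : 0 ≤ K * c * y := mul_nonneg hKc0 hy0
    nlinarith [p1, p2, p3, h1, h2, h3]
  calc 4 * K * x + 4 * K * (L:ℝ) * ε * c + (K * ε * c + K * y)
      ≤ 20 * K * c * (x + (L:ℝ) * ε + y) := hsum
    _ = 20 * K * ((2 + α) / α) * ((2 : ℝ) ^ (-(L : ℝ)) + (L:ℝ) * ε
        + (2 : ℝ) ^ (-(1 + δ) * (M : ℝ))) := by rw [hcdef, hxdef, hydef]
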